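/- Let H_I be a bounded self-adjoint operator and P a projection-valued measure on configuration space Q acting on the Hilbert space. Then the following are equivalent: (i) for all unit vectors ψ and all measurable sets B, B' ⊆ Q, Im⟨ψ|P(B) H_I P(B')|ψ⟩ = 0; (ii) [H_I, P(B)] = 0 for all measurable B ⊆ Q. -/

import Mathlib

open scoped InnerProductSpace
open ContinuousLinearMap MeasureTheory

/-- A projection-valued measure (PVM) on a measurable space `Q`, acting on a complex
Hilbert space `H`: a family of self-adjoint, multiplicative projections indexed by
measurable sets, normalized on `Set.univ`, together with, for each vector `ψ`, the
associated Borel measure `B ↦ ‖P(B)ψ‖²` (which encodes countable additivity). -/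
structure PVM (Q : Type*) [MeasurableSpace Q] (H : Type*) [NormedAddCommGroup H]
    [InnerProductSpace ℂ H] [CompleteSpace H] where
  proj : Set Q → (H →L[ℂ] H)
  sa : ∀ B, MeasurableSet B → ContinuousLinearMap.adjoint (proj B) = proj B
  inter : ∀ B B', MeasurableSet B → MeasurableSet B' →
    proj (B ∩ B') = (proj B) ∘L (proj B')
  empty' : proj ∅ = 0
  univ' : proj Set.univ = 1
  μ : H → Measure Q
  μ_apply : ∀ (ψ : H) (B : Set Q), MeasurableSet B → μ ψ B = ENNReal.ofReal (‖proj B ψ‖ ^ 2)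

/-- `P.IntegralEq f G` says that `G = ∫ f dP`, expressed through the diagonal matrix
elements: `⟨ψ|G|ψ⟩ = ∫ f(q) μ^P_ψ(dq)` for all `ψ` (which determines `G` by
polarization). -/
def PVM.IntegralEq {Q : Type*} [MeasurableSpace Q] {H : Type*} [NormedAddCommGroup H]
    [InnerProductSpace ℂ H] [CompleteSpace H]
    (P : PVM Q H) (f : Q → ℝ) (G : H →L[ℂ] H) : Prop :=
  ∀ ψ : H, ⟪ψ, G ψ⟫_ℂ = ((∫ q, f q ∂(P.μ ψ) : ℝ) : ℂ)

/-- determinism criterion: For a bounded self-adjoint `H_I` and a PVM `P`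
on configuration space `Q`, the following are equivalent:
(i) for all unit vectors `ψ` and all measurable `B, B' ⊆ Q`,
    `Im ⟨ψ|P(B) H_I P(B')|ψ⟩ = 0` (all jump rates vanish);
(ii) `[H_I, P(B)] = 0` for all measurable `B ⊆ Q`. -/
theorem stmt5
    {Q : Type*} [MeasurableSpace Q] {H : Type*} [NormedAddCommGroup H]
    [InnerProductSpace ℂ H] [CompleteSpace H]
    (P : PVM Q H) (HI : H →L[ℂ] H) (hHIsa : ContinuousLinearMap.adjoint HI = HI) :
    (∀ ψ : H, ‖ψ‖ = 1 → ∀ B B' : Set Q, MeasurableSet B → MeasurableSet B' →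
        (⟪ψ, P.proj B (HI (P.proj B' ψ))⟫_ℂ).im = 0)
      ↔ (∀ B : Set Q, MeasurableSet B → HI ∘L P.proj B = P.proj B ∘L HI) := by
  constructor
  · intro h B₀ hB₀
    -- extend (i) to all vectors by scaling
    have h' : ∀ (ψ : H) (B B' : Set Q), MeasurableSet B → MeasurableSet B' →
        (⟪ψ, P.proj B (HI (P.proj B' ψ))⟫_ℂ).im = 0 := by
      intro ψ B B' hB hB'
      rcases eq_or_ne ψ 0 with rfl | hψ
      · simp
      · set φ : H := (‖ψ‖ : ℂ)⁻¹ • ψ with hφ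
        have hn : ‖φ‖ = 1 := by
          simp [hφ, norm_smul, norm_inv, hψ]
        have h1 := h φ hn B B' hB hB'
        have hexp : ⟪φ, P.proj B (HI (P.proj B' φ))⟫_ℂ
            = ((‖ψ‖⁻¹ ^ 2 : ℝ) : ℂ) * ⟪ψ, P.proj B (HI (P.proj B' ψ))⟫_ℂ := by
          simp only [hφ, inner_smul_left, ContinuousLinearMap.map_smul, inner_smul_right,
            smul_eq_mul]
          rw [map_inv₀, Complex.conj_ofReal]
          push_cast
          ring
        rw [hexp] at h1
        simp only [Complex.mul_im, Complex.ofReal_im, Complex.ofReal_re, zero_mul, add_zero] at h1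
        have hne : (‖ψ‖⁻¹ ^ 2 : ℝ) ≠ 0 := by
          have : ‖ψ‖ ≠ 0 := norm_ne_zero_iff.mpr hψ
          positivity
        exact (mul_eq_zero.mp h1).resolve_left hne
    -- P B ∘ HI ∘ P B' = P B' ∘ HI ∘ P B for all measurable B, B'
    have key : ∀ B B' : Set Q, MeasurableSet B → MeasurableSet B' →
        P.proj B ∘L HI ∘L P.proj B' = P.proj B' ∘L HI ∘L P.proj B := by
      intro B B' hB hB'
      set A := P.proj B ∘L HI ∘L P.proj B' with hA
      set A' := P.proj B' ∘L HI ∘L P.proj B with hA'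
      have hadj : ContinuousLinearMap.adjoint A = A' := by
        simp [hA, hA', adjoint_comp, P.sa B hB, P.sa B' hB', hHIsa, comp_assoc]
      have hz : ∀ x : H, ⟪(A - A') x, x⟫_ℂ = 0 := by
        intro x
        have h1 : (⟪x, A x⟫_ℂ).im = 0 := h' x B B' hB hB'
        have e1 : ⟪A x, x⟫_ℂ = (starRingEnd ℂ) ⟪x, A x⟫_ℂ := by rw [← inner_conj_symm]
        have e2 : ⟪A' x, x⟫_ℂ = ⟪x, A x⟫_ℂ := by
          rw [← hadj, ContinuousLinearMap.adjoint_inner_left]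
        rw [ContinuousLinearMap.sub_apply, inner_sub_left, e1, e2,
          Complex.conj_eq_iff_im.mpr h1, sub_self]
      have hlin : ((A - A' : H →L[ℂ] H) : H →ₗ[ℂ] H) = 0 :=
        (inner_map_self_eq_zero ((A - A' : H →L[ℂ] H) : H →ₗ[ℂ] H)).mp (fun x => hz x)
      have : A - A' = 0 := ContinuousLinearMap.coe_injective (by simpa using hlin)
      exact sub_eq_zero.mp this
    have hk := key Set.univ B₀ MeasurableSet.univ hB₀
    simpa [P.univ', ContinuousLinearMap.one_def] using hk
  · intro h ψ _ B B' hB hB'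
    have hBB : MeasurableSet (B ∩ B') := hB.inter hB'
    have hPB2 : P.proj (B ∩ B') = P.proj B ∘L P.proj B' := P.inter B B' hB hB'
    have hPBB : P.proj (B ∩ B') ∘L P.proj (B ∩ B') = P.proj (B ∩ B') :=
      (P.inter _ _ hBB hBB).symm.trans (by simp)
    have hrw : P.proj B (HI (P.proj B' ψ)) = P.proj (B ∩ B') (HI (P.proj (B ∩ B') ψ)) := by
      have e1 : P.proj B (HI (P.proj B' ψ)) = P.proj B (P.proj B' (HI ψ)) := by
        have := congrFun (congrArg DFunLike.coe (h B' hB')) ψ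
        simp only [comp_apply] at this
        rw [this]
      have e2 : P.proj (B ∩ B') (HI (P.proj (B ∩ B') ψ))
          = P.proj (B ∩ B') (P.proj (B ∩ B') (HI ψ)) := by
        have := congrFun (congrArg DFunLike.coe (h (B ∩ B') hBB)) ψ
        simp only [comp_apply] at this
        rw [this]
      have e3 := congrFun (congrArg DFunLike.coe hPBB) (HI ψ)
      simp only [comp_apply] at e3
      have e4 := congrFun (congrArg DFunLike.coe hPB2) (HI ψ)
      simp only [comp_apply] at e4
      rw [e1, e2, e3, e4]
    rw [hrw]
    set x := P.proj (B ∩ B') ψ with hx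
    rw [← P.sa _ hBB, ContinuousLinearMap.adjoint_inner_right, ← hx]
    have hco : ⟪x, HI x⟫_ℂ = (starRingEnd ℂ) ⟪x, HI x⟫_ℂ := by
      conv_lhs => rw [← hHIsa]
      rw [ContinuousLinearMap.adjoint_inner_right, ← inner_conj_symm]
    have := congrArg Complex.im hco
    rw [Complex.conj_im] at this
    linarith
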